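/- Let F be a field which is quadratically closed (every degree-2 polynomial over F splits), and let n ≥ 2. Then the space of all n×n matrices over F of the block form [[A, ?],[0, U]] with A ∈ Mat₂(F) arbitrary, U upper triangular of size n−2, and the upper-right block arbitrary, is a weakly triangularizable subspace of Mat_n(F) of dimension n(n+1)/2 + 1. Hence t_n(F) > n(n+1)/2, where t_n(F) is the maximal dimension of a subspace of Mat_n(F) all of whose elements are triangularizable over F. -/

import Mathlib

/-- A square matrix is triangularizable over the ground field when it is
similar over that field to an upper triangular matrix. -/
def Matrix.Triangularizable {n : ℕ} {F : Type*} [Field F]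
    (M : Matrix (Fin n) (Fin n) F) : Prop :=
  ∃ P : (Matrix (Fin n) (Fin n) F)ˣ,
    ((P : Matrix (Fin n) (Fin n) F) * M * ((P⁻¹ : (Matrix (Fin n) (Fin n) F)ˣ) :
      Matrix (Fin n) (Fin n) F)).BlockTriangular id

/-- The space of block matrices [[A, ?], [0, U]] with A an arbitrary 2×2 block,
U upper triangular of size n−2, and arbitrary upper-right block: entries
below the diagonal vanish except possibly in the top-left 2×2 corner. -/
def blockSpace (F : Type*) [Field F] (n : ℕ) :
    Submodule F (Matrix (Fin n) (Fin n) F) where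
  carrier := {M | ∀ i j : Fin n, (j : ℕ) < (i : ℕ) → 2 ≤ (i : ℕ) → M i j = 0}
  add_mem' := by
    intro a b ha hb i j h1 h2
    simp [Matrix.add_apply, ha i j h1 h2, hb i j h1 h2]
  zero_mem' := by intro i j _ _; rfl
  smul_mem' := by
    intro c a ha i j h1 h2
    simp [Matrix.smul_apply, ha i j h1 h2]

section Aux
set_option maxHeartbeats 1000000

variable {F : Type*} [Field F] {n : ℕ}



/-- 2×2 triangularization from quadratic closedness. -/
lemma two_two_lemma (hQC : ∀ q : Polynomial F, q.degree = 2 → q.Splits)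
    (A : Matrix (Fin 2) (Fin 2) F) :
    ∃ Q : (Matrix (Fin 2) (Fin 2) F)ˣ,
      ((Q : Matrix (Fin 2) (Fin 2) F) * A * ((Q⁻¹ : (Matrix (Fin 2) (Fin 2) F)ˣ) :
        Matrix (Fin 2) (Fin 2) F)) 1 0 = 0 := by
  obtain ⟨a, b, c, d, rfl⟩ : ∃ a b c d, A = !![a, b; c, d] :=
    ⟨_, _, _, _, Matrix.eta_fin_two A⟩
  by_cases hc : c = 0
  · exact ⟨1, by simp [hc]⟩
  · set q : Polynomial F := Polynomial.X ^ 2 - Polynomial.C (a + d) * Polynomial.X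
        + Polynomial.C (a * d - b * c) with hq
    have hdeg : q.degree = 2 := by
      rw [hq]; compute_degree!
    obtain ⟨lam, hlam⟩ := Polynomial.Splits.exists_eval_eq_zero (hQC q hdeg) (by rw [hdeg]; norm_num)
    have heq : lam ^ 2 - (a + d) * lam + (a * d - b * c) = 0 := by
      simpa [hq] using hlam
    set R : Matrix (Fin 2) (Fin 2) F := !![lam - d, 1; c, 0] with hR
    have hdet : IsUnit R.det := by
      rw [hR, Matrix.det_fin_two_of]
      simpa using (neg_ne_zero.mpr hc).isUnit
    have hART : !![a, b; c, d] * R = R * !![lam, 1; 0, a + d - lam] := by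
      rw [hR]
      ext i j
      fin_cases i <;> fin_cases j <;>
        simp [Matrix.mul_apply, Fin.sum_univ_two] <;>
        first
          | linear_combination (-2 : F) * heq
          | linear_combination -heq
          | linear_combination heq
          | ring
    refine ⟨⟨R⁻¹, R, Matrix.nonsing_inv_mul R hdet, Matrix.mul_nonsing_inv R hdet⟩, ?_⟩
    have hfin : (R⁻¹ * !![a, b; c, d] * R) = !![lam, 1; 0, a + d - lam] := by
      rw [mul_assoc, hART, ← mul_assoc, Matrix.nonsing_inv_mul R hdet, one_mul]
    show (R⁻¹ * !![a, b; c, d] * R) 1 0 = 0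
    rw [hfin]; simp


/-- Embed a 2×2 matrix in the top-left corner of an n×n identity. -/
def embTwo (n : ℕ) (B : Matrix (Fin 2) (Fin 2) F) : Matrix (Fin n) (Fin n) F :=
  fun i j =>
    if hi : (i : ℕ) < 2 then
      (if hj : (j : ℕ) < 2 then B ⟨i, hi⟩ ⟨j, hj⟩ else 0)
    else (if i = j then 1 else 0)

lemma sum_lt_two (hn : 2 ≤ n) (f : Fin n → F) (hf : ∀ k : Fin n, 2 ≤ (k : ℕ) → f k = 0) :
    ∑ k, f k = f ⟨0, by omega⟩ + f ⟨1, by omega⟩ := by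
  have hne : (⟨0, by omega⟩ : Fin n) ≠ ⟨1, by omega⟩ := by simp [Fin.ext_iff]
  rw [← Finset.sum_pair hne]
  refine (Finset.sum_subset (Finset.subset_univ _) ?_).symm
  intro k _ hk
  apply hf
  simp only [Finset.mem_insert, Finset.mem_singleton] at hk
  push_neg at hk
  obtain ⟨h0, h1⟩ := hk
  have h0' : (k : ℕ) ≠ 0 := fun h => h0 (Fin.ext h)
  have h1' : (k : ℕ) ≠ 1 := fun h => h1 (Fin.ext h)
  omega

lemma embTwo_mul (hn : 2 ≤ n) (B C : Matrix (Fin 2) (Fin 2) F) :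
    embTwo n B * embTwo n C = embTwo n (B * C) := by
  ext i j
  rw [Matrix.mul_apply]
  by_cases hi : (i : ℕ) < 2
  · have hz : ∀ k : Fin n, 2 ≤ (k : ℕ) → embTwo n B i k * embTwo n C k j = 0 := by
      intro k hk
      have : embTwo n B i k = 0 := by simp [embTwo, hi, Nat.not_lt.mpr hk]
      simp [this]
    rw [sum_lt_two hn _ hz]
    by_cases hj : (j : ℕ) < 2
    · simp only [embTwo, hi, hj, dif_pos]
      rw [Matrix.mul_apply, Fin.sum_univ_two]
      simp
    · simp [embTwo, hi, hj]
  · have hd : ∀ k : Fin n, embTwo n B i k = if i = k then 1 else 0 := by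
      intro k; simp [embTwo, hi]
    simp only [hd, ite_mul, one_mul, zero_mul]
    rw [Finset.sum_ite_eq Finset.univ i (fun k => embTwo n C k j)]
    simp only [Finset.mem_univ, if_true]
    have hii : ¬ ((i:ℕ) < 2) := hi
    by_cases hj : (j : ℕ) < 2
    · have : i ≠ j := fun h => by subst h; exact hii hj
      simp [embTwo, hi, hj, this]
    · simp [embTwo, hi, hj]

lemma embTwo_one (hn : 2 ≤ n) : embTwo n (1 : Matrix (Fin 2) (Fin 2) F) = 1 := by
  ext i j
  by_cases hi : (i : ℕ) < 2 <;> by_cases hj : (j : ℕ) < 2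
  · simp [embTwo, hi, hj, Matrix.one_apply, Fin.ext_iff]
  · have hne : i ≠ j := fun h => by subst h; exact hj hi
    simp [embTwo, hi, hj, Matrix.one_apply, hne]
  · have hne : i ≠ j := fun h => by subst h; exact hi hj
    simp [embTwo, hi, hj, Matrix.one_apply, hne]
  · simp [embTwo, hi, Matrix.one_apply]

lemma conj_lower (hn : 2 ≤ n) (M : Matrix (Fin n) (Fin n) F)
    (hM : ∀ i j : Fin n, (j : ℕ) < (i : ℕ) → 2 ≤ (i : ℕ) → M i j = 0)
    (B C : Matrix (Fin 2) (Fin 2) F) :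
    ∀ i j : Fin n, (j : ℕ) < (i : ℕ) → 2 ≤ (i : ℕ) →
      (embTwo n B * M * embTwo n C) i j = 0 := by
  have hBM : ∀ i j : Fin n, (j : ℕ) < (i : ℕ) → 2 ≤ (i : ℕ) → (embTwo n B * M) i j = 0 := by
    intro i j h1 h2
    rw [Matrix.mul_apply]
    have hi : ¬((i : ℕ) < 2) := by omega
    have hd : ∀ k : Fin n, embTwo n B i k = if i = k then 1 else 0 := fun k => by
      simp [embTwo, hi]
    simp only [hd, ite_mul, one_mul, zero_mul]
    rw [Finset.sum_ite_eq Finset.univ i (fun k => M k j)]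
    simp [hM i j h1 h2]
  intro i j h1 h2
  rw [Matrix.mul_apply]
  apply Finset.sum_eq_zero
  intro k _
  by_cases hk : (k : ℕ) < 2
  · rw [hBM i k (lt_of_lt_of_le hk h2) h2, zero_mul]
  · by_cases hkj : k = j
    · subst hkj; rw [hBM i k h1 h2, zero_mul]
    · have hz : embTwo n C k j = 0 := by simp [embTwo, hk, hkj]
      rw [hz, mul_zero]

lemma conj_topLeft (hn : 2 ≤ n) (M : Matrix (Fin n) (Fin n) F)
    (B C : Matrix (Fin 2) (Fin 2) F) (i j : Fin n) (hi : (i : ℕ) < 2) (hj : (j : ℕ) < 2) :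
    (embTwo n B * M * embTwo n C) i j
      = (B * (Matrix.of fun p q : Fin 2 => M (Fin.castLE hn p) (Fin.castLE hn q)) * C)
          ⟨i, hi⟩ ⟨j, hj⟩ := by
  have e0 : Fin.castLE hn (0 : Fin 2) = (⟨0, by omega⟩ : Fin n) := by ext; simp
  have e1 : Fin.castLE hn (1 : Fin 2) = (⟨1, by omega⟩ : Fin n) := by ext; simp
  have hBM : ∀ l : Fin n, (embTwo n B * M) i l
      = B ⟨i, hi⟩ 0 * M ⟨0, by omega⟩ l + B ⟨i, hi⟩ 1 * M ⟨1, by omega⟩ l := by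
    intro l
    rw [Matrix.mul_apply]
    rw [sum_lt_two hn _ (fun k hk => by
      have : embTwo n B i k = 0 := by simp [embTwo, hi, Nat.not_lt.mpr hk]
      rw [this, zero_mul])]
    simp [embTwo, hi, Fin.zero_eta, Fin.mk_one]
  rw [Matrix.mul_apply]
  rw [sum_lt_two hn _ (fun l hl => by
    have : embTwo n C l j = 0 := by
      have : l ≠ j := fun h => by subst h; omega
      simp [embTwo, Nat.not_lt.mpr hl, this]
    rw [this, mul_zero])]
  rw [hBM, hBM]
  have hC0 : embTwo n C ⟨0, by omega⟩ j = C 0 ⟨j, hj⟩ := by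
    simp [embTwo, hj, Fin.zero_eta]
  have hC1 : embTwo n C ⟨1, by omega⟩ j = C 1 ⟨j, hj⟩ := by
    simp [embTwo, hj, Fin.mk_one]
  rw [hC0, hC1]
  rw [Matrix.mul_apply, Fin.sum_univ_two, Matrix.mul_apply, Fin.sum_univ_two,
    Matrix.mul_apply, Fin.sum_univ_two]
  simp only [Matrix.of_apply, e0, e1]
  try ring

lemma part1 (hQC : ∀ q : Polynomial F, q.degree = 2 → q.Splits)
    (hn : 2 ≤ n) (M : Matrix (Fin n) (Fin n) F)
    (hM : ∀ i j : Fin n, (j : ℕ) < (i : ℕ) → 2 ≤ (i : ℕ) → M i j = 0) :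
    M.Triangularizable := by
  obtain ⟨Q, hQ⟩ := two_two_lemma hQC
    (Matrix.of fun p q : Fin 2 => M (Fin.castLE hn p) (Fin.castLE hn q))
  refine ⟨⟨embTwo n ↑Q, embTwo n ↑Q⁻¹, ?_, ?_⟩, ?_⟩
  · rw [embTwo_mul hn, Q.mul_inv, embTwo_one hn]
  · rw [embTwo_mul hn, Q.inv_mul, embTwo_one hn]
  · intro i j hij
    have hij' : (j : ℕ) < (i : ℕ) := hij
    show (embTwo n (Q : Matrix (Fin 2) (Fin 2) F) * M *
      embTwo n ((Q⁻¹ : (Matrix (Fin 2) (Fin 2) F)ˣ) : Matrix (Fin 2) (Fin 2) F)) i j = 0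
    by_cases h2 : 2 ≤ (i : ℕ)
    · exact conj_lower hn M hM _ _ i j hij' h2
    · have hi : (i : ℕ) < 2 := by omega
      have hj : (j : ℕ) < 2 := by omega
      rw [conj_topLeft hn M _ _ i j hi hj]
      have ei : (⟨(i : ℕ), hi⟩ : Fin 2) = 1 := by ext; simp; omega
      have ej : (⟨(j : ℕ), hj⟩ : Fin 2) = 0 := by ext; simp; omega
      rw [ei, ej]
      exact hQ

def bsP (n : ℕ) (p : Fin n × Fin n) : Prop :=
  ¬((p.2 : ℕ) < (p.1 : ℕ) ∧ 2 ≤ (p.1 : ℕ))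

instance (n : ℕ) : DecidablePred (bsP n) := fun _ => instDecidableNot

lemma mem_blockSpace_iff {F : Type*} [Field F] {n : ℕ} {M : Matrix (Fin n) (Fin n) F} :
    M ∈ blockSpace F n ↔ ∀ i j : Fin n, (j : ℕ) < (i : ℕ) → 2 ≤ (i : ℕ) → M i j = 0 :=
  Iff.rfl

def bsEquiv (F : Type*) [Field F] (n : ℕ) :
    blockSpace F n ≃ₗ[F] ({p : Fin n × Fin n // bsP n p} → F) where
  toFun M p := (M : Matrix (Fin n) (Fin n) F) p.1.1 p.1.2
  map_add' M N := rfl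
  map_smul' c M := rfl
  invFun g := ⟨fun i j => if h : bsP n (i, j) then g ⟨(i, j), h⟩ else 0, by
    intro i j h1 h2
    show (if h : bsP n (i, j) then g ⟨(i, j), h⟩ else 0) = 0
    rw [dif_neg]
    simp only [bsP, not_not]
    exact ⟨h1, h2⟩⟩
  left_inv M := by
    apply Subtype.ext
    funext i j
    by_cases h : bsP n (i, j)
    · simp [h]
    · have h' : (j : ℕ) < (i : ℕ) ∧ 2 ≤ (i : ℕ) := by
        simp only [bsP, not_not] at h; exact h
      show (if h : bsP n (i, j) then _ else 0) = _
      rw [dif_neg h]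
      exact (M.2 i j h'.1 h'.2).symm
  right_inv g := by
    funext p
    show (if h : bsP n (p.1.1, p.1.2) then g ⟨(p.1.1, p.1.2), h⟩ else 0) = g p
    rw [dif_pos (by exact p.2)]

lemma helper_min (N i : ℕ) :
    ∑ j ∈ Finset.range N, (if j < i then (1 : ℕ) else 0) = min i N := by
  induction N with
  | zero => simp
  | succ N ih => rw [Finset.sum_range_succ, ih]; split_ifs <;> omega

lemma card_count {n : ℕ} (hn : 2 ≤ n) :
    Fintype.card {p : Fin n × Fin n // bsP n p} = n * (n + 1) / 2 + 1 := by
  classical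
  rw [Fintype.card_subtype]
  have hsplit : (Finset.univ.filter (bsP n)).card
      + (Finset.univ.filter (fun p => ¬ bsP n p)).card = n * n := by
    rw [Finset.card_filter_add_card_filter_not, Finset.card_univ,
      Fintype.card_prod, Fintype.card_fin]
  have hbad : (Finset.univ.filter (fun p : Fin n × Fin n => ¬ bsP n p)).card
      = ∑ i : Fin n, (if 2 ≤ (i : ℕ) then (i : ℕ) else 0) := by
    rw [Finset.card_filter, Fintype.sum_prod_type]
    apply Finset.sum_congr rfl
    intro i _
    by_cases h2 : 2 ≤ (i : ℕ)
    · have hterm : ∀ j : Fin n, (if ¬ bsP n (i, j) then (1 : ℕ) else 0)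
          = if (j : ℕ) < (i : ℕ) then 1 else 0 := by
        intro j; simp [bsP, h2]
      rw [Finset.sum_congr rfl (fun j _ => hterm j)]
      rw [Fin.sum_univ_eq_sum_range (fun j => if j < (i : ℕ) then (1 : ℕ) else 0)]
      rw [helper_min]
      have : (i : ℕ) < n := i.2
      rw [if_pos h2]
      omega
    · have hterm : ∀ j : Fin n, (if ¬ bsP n (i, j) then (1 : ℕ) else 0) = 0 := by
        intro j; simp [bsP, h2]
      simp [hterm, h2]
  have hbadval : (∑ i : Fin n, (if 2 ≤ (i : ℕ) then (i : ℕ) else 0)) + 1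
      = ∑ i ∈ Finset.range n, i := by
    rw [Fin.sum_univ_eq_sum_range (fun i => if 2 ≤ i then i else 0)]
    have h1mem : (1 : ℕ) ∈ Finset.range n := by simp; omega
    have hind : (∑ i ∈ Finset.range n, (if i = 1 then (1 : ℕ) else 0)) = 1 := by
      rw [Finset.sum_ite_eq' (Finset.range n) 1 (fun _ => (1 : ℕ))]
      simp [h1mem]
    calc (∑ i ∈ Finset.range n, (if 2 ≤ i then i else 0)) + 1
        = (∑ i ∈ Finset.range n, (if 2 ≤ i then i else 0))
          + ∑ i ∈ Finset.range n, (if i = 1 then (1 : ℕ) else 0) := by rw [hind]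
      _ = ∑ i ∈ Finset.range n, ((if 2 ≤ i then i else 0) + (if i = 1 then 1 else 0)) := by
          rw [Finset.sum_add_distrib]
      _ = ∑ i ∈ Finset.range n, i := by
          apply Finset.sum_congr rfl
          intro i _
          split_ifs <;> omega
  have hgauss : (∑ i ∈ Finset.range n, i) * 2 = n * (n - 1) :=
    Finset.sum_range_id_mul_two n
  obtain ⟨m, rfl⟩ : ∃ m, n = m + 2 := ⟨n - 2, by omega⟩
  rw [hbad] at hsplit
  have e1 : (m + 2) * (m + 2) = m * m + 4 * m + 4 := by ring
  have e2 : (m + 2) * ((m + 2) - 1) = m * m + 3 * m + 2 := by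
    have : (m + 2) - 1 = m + 1 := by omega
    rw [this]; ring
  have e3 : (m + 2) * ((m + 2) + 1) = m * m + 5 * m + 6 := by ring
  rw [e1] at hsplit
  rw [e2] at hgauss
  rw [e3]
  set s := m * m with hs
  set g := (Finset.univ.filter (bsP (m + 2))).card with hg
  set bd := (∑ i : Fin (m + 2), (if 2 ≤ (i : ℕ) then (i : ℕ) else 0)) with hbd
  set t := (∑ i ∈ Finset.range (m + 2), i) with ht
  clear_value s g bd t
  omega

end Aux

set_option maxHeartbeats 1000000 in
theorem stmt_16 {F : Type*} [Field F]
    (hQC : ∀ q : Polynomial F, q.degree = 2 → q.Splits)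
    {n : ℕ} (hn : 2 ≤ n) :
    (∀ M ∈ blockSpace F n, M.Triangularizable) ∧
    Module.finrank F (blockSpace F n) = n * (n + 1) / 2 + 1 := by
  constructor
  · intro M hM
    exact part1 hQC hn M hM
  · rw [(bsEquiv F n).finrank_eq, Module.finrank_fintype_fun_eq_card, card_count hn]
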